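/- Let H ⊂ ℝ⁴ be any hyperplane through the origin, given as H = {x ∈ ℝ⁴ : B(ρ,x) = 0} for some nonzero ρ ∈ ℝ⁴. Then for every ε > 0 there exists a lattice root α of Γ^{2,2} (viewed as a point of ℝ⁴) with |B(ρ,α)| < ε·‖ρ‖₂; equivalently, either H contains a lattice root or there are lattice roots at arbitrarily small (Euclidean) distance from H. -/

import Mathlib

/-- The bilinear form of `Γ^{2,2}` extended ℝ-bilinearly to `ℝ⁴`. -/
def GammaBR (x y : EuclideanSpace ℝ (Fin 4)) : ℝ :=
  -(x 0 * y 1 + x 1 * y 0) - (x 2 * y 3 + x 3 * y 2)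

/-- A lattice root of `Γ^{2,2}`: an element `(k,l,m,n)` with `kl + mn = -1`,
equivalently of norm `B(α,α) = 2`. -/
def IsLatticeRoot (α : Fin 4 → ℤ) : Prop :=
  α 0 * α 1 + α 2 * α 3 = -1

/- ### Auxiliary material -/

/-- There is a root `(k,l,m,n)` (i.e. `kl + mn = -1`) orthogonal (for the dot
pairing) to the integer vector `(d₀,d₁,d₂,d₃)`. -/
def HasRoot (d₀ d₁ d₂ d₃ : ℤ) : Prop :=
  ∃ k l m n : ℤ, k * l + m * n = -1 ∧ d₀ * k + d₁ * l + d₂ * m + d₃ * n = 0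

lemma hasRoot_base (d₀ d₁ : ℤ) : HasRoot d₀ d₁ 0 0 :=
  ⟨0, 0, 1, -1, by ring, by ring⟩

lemma move_col (d₀ d₁ d₂ d₃ q : ℤ) (h : HasRoot d₀ (d₁ + q * d₃) (d₂ - q * d₀) d₃) :
    HasRoot d₀ d₁ d₂ d₃ := by
  obtain ⟨k, l, m, n, h1, h2⟩ := h
  exact ⟨k - q * m, l, m, n + q * l, by linear_combination h1, by linear_combination h2⟩

lemma move_row (d₀ d₁ d₂ d₃ q : ℤ) (h : HasRoot d₀ (d₁ - q * d₂) d₂ (d₃ + q * d₀)) :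
    HasRoot d₀ d₁ d₂ d₃ := by
  obtain ⟨k, l, m, n, h1, h2⟩ := h
  exact ⟨k + q * n, l, m - q * l, n, by linear_combination h1, by linear_combination h2⟩

lemma move_colswap (d₀ d₁ d₂ d₃ : ℤ) (h : HasRoot d₂ d₃ (-d₀) (-d₁)) :
    HasRoot d₀ d₁ d₂ d₃ := by
  obtain ⟨k, l, m, n, h1, h2⟩ := h
  exact ⟨-m, -n, k, l, by linear_combination h1, by linear_combination h2⟩

lemma move_rowswap (d₀ d₁ d₂ d₃ : ℤ) (h : HasRoot (-d₃) (-d₂) d₁ d₀) :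
    HasRoot d₀ d₁ d₂ d₃ := by
  obtain ⟨k, l, m, n, h1, h2⟩ := h
  exact ⟨n, m, -l, -k, by linear_combination h1, by linear_combination h2⟩

lemma move_neg (d₀ d₁ d₂ d₃ : ℤ) (h : HasRoot (-d₀) (-d₁) d₂ d₃) :
    HasRoot d₀ d₁ d₂ d₃ := by
  obtain ⟨k, l, m, n, h1, h2⟩ := h
  exact ⟨-k, -l, m, n, by linear_combination h1, by linear_combination h2⟩

lemma hasRoot_of_pos : ∀ N : ℕ, ∀ d₀ d₁ d₂ d₃ : ℤ, d₀.natAbs ≤ N → 0 < d₀ →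
    HasRoot d₀ d₁ d₂ d₃ := by
  intro N
  induction N with
  | zero =>
    intro d₀ d₁ d₂ d₃ hle hpos
    exfalso; omega
  | succ N ih =>
    intro d₀ d₁ d₂ d₃ hle hpos
    by_cases h2 : d₀ ∣ d₂
    · by_cases h3 : d₀ ∣ d₃
      · apply move_col d₀ d₁ d₂ d₃ (d₂ / d₀)
        have e2 : d₂ - d₂ / d₀ * d₀ = 0 := by
          rw [Int.ediv_mul_cancel h2]; ring
        rw [e2]
        apply move_row d₀ _ 0 d₃ (-(d₃ / d₀))
        have e3 : d₃ + -(d₃ / d₀) * d₀ = 0 := by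
          rw [neg_mul, Int.ediv_mul_cancel h3]; ring
        rw [e3]
        exact hasRoot_base _ _
      · -- reduce d₃ mod d₀ and swap rows
        apply move_row d₀ d₁ d₂ d₃ (-(d₃ / d₀))
        have e3 : d₃ + -(d₃ / d₀) * d₀ = d₃ % d₀ := by
          rw [Int.emod_def]; ring
        rw [e3]
        apply move_rowswap
        apply move_neg
        simp only [neg_neg]
        have hr0 : 0 ≤ d₃ % d₀ := Int.emod_nonneg d₃ (by omega)
        have hrlt : d₃ % d₀ < d₀ := Int.emod_lt_of_pos d₃ hpos
        have hrne : d₃ % d₀ ≠ 0 := by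
          intro h; exact h3 (Int.dvd_of_emod_eq_zero h)
        exact ih _ _ _ _ (by omega) (by omega)
    · -- reduce d₂ mod d₀ and swap columns
      apply move_col d₀ d₁ d₂ d₃ (d₂ / d₀)
      have e2 : d₂ - d₂ / d₀ * d₀ = d₂ % d₀ := by
        rw [Int.emod_def]; ring
      rw [e2]
      apply move_colswap
      have hr0 : 0 ≤ d₂ % d₀ := Int.emod_nonneg d₂ (by omega)
      have hrlt : d₂ % d₀ < d₀ := Int.emod_lt_of_pos d₂ hpos
      have hrne : d₂ % d₀ ≠ 0 := by
        intro h; exact h2 (Int.dvd_of_emod_eq_zero h)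
      exact ih _ _ _ _ (by omega) (by omega)

lemma hasRoot_of_ne (d₀ d₁ d₂ d₃ : ℤ) (h : d₀ ≠ 0) : HasRoot d₀ d₁ d₂ d₃ := by
  rcases h.lt_or_gt with hlt | hlt
  · exact move_neg _ _ _ _ (hasRoot_of_pos (-d₀).natAbs _ _ _ _ le_rfl (by omega))
  · exact hasRoot_of_pos d₀.natAbs _ _ _ _ le_rfl hlt

lemma hasRoot (d₀ d₁ d₂ d₃ : ℤ) : HasRoot d₀ d₁ d₂ d₃ := by
  rcases eq_or_ne d₀ 0 with h0 | h0
  · subst h0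
    rcases eq_or_ne d₂ 0 with h2 | h2
    · subst h2
      rcases eq_or_ne d₃ 0 with h3 | h3
      · subst h3; exact hasRoot_base _ _
      · exact move_rowswap _ _ _ _ (hasRoot_of_ne _ _ _ _ (by omega))
    · exact move_colswap _ _ _ _ (hasRoot_of_ne _ _ _ _ h2)
  · exact hasRoot_of_ne _ _ _ _ h0

/- ### Real approximation -/

/-- There is a root `(k,l,m,n)` whose pairing against `(c₀,c₁,c₂,c₃)` is `ε`-small. -/
def Approx (c₀ c₁ c₂ c₃ ε : ℝ) : Prop :=
  ∃ k l m n : ℤ, k * l + m * n = -1 ∧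
    |c₀ * (k : ℝ) + c₁ * (l : ℝ) + c₂ * (m : ℝ) + c₃ * (n : ℝ)| < ε

lemma approx_swap01 {c₀ c₁ c₂ c₃ ε : ℝ} (h : Approx c₁ c₀ c₂ c₃ ε) :
    Approx c₀ c₁ c₂ c₃ ε := by
  obtain ⟨k, l, m, n, h1, h2⟩ := h
  refine ⟨l, k, m, n, by linear_combination h1, ?_⟩
  have e : c₀ * (l : ℝ) + c₁ * (k : ℝ) + c₂ * (m : ℝ) + c₃ * (n : ℝ)
      = c₁ * (k : ℝ) + c₀ * (l : ℝ) + c₂ * (m : ℝ) + c₃ * (n : ℝ) := by ring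
  rw [e]; exact h2

lemma approx_swap23 {c₀ c₁ c₂ c₃ ε : ℝ} (h : Approx c₀ c₁ c₃ c₂ ε) :
    Approx c₀ c₁ c₂ c₃ ε := by
  obtain ⟨k, l, m, n, h1, h2⟩ := h
  refine ⟨k, l, n, m, by linear_combination h1, ?_⟩
  have e : c₀ * (k : ℝ) + c₁ * (l : ℝ) + c₂ * (n : ℝ) + c₃ * (m : ℝ)
      = c₀ * (k : ℝ) + c₁ * (l : ℝ) + c₃ * (m : ℝ) + c₂ * (n : ℝ) := by ring
  rw [e]; exact h2

/-- Key analytic case: the ratio `c₁ / c₃` is irrational. -/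
lemma approx_of_irrational (c₀ c₁ c₂ c₃ ε : ℝ) (hε : 0 < ε) (h3 : c₃ ≠ 0)
    (hIr : ¬ ∃ a b : ℤ, b ≠ 0 ∧ (b : ℝ) * c₁ = (a : ℝ) * c₃) :
    Approx c₀ c₁ c₂ c₃ ε := by
  obtain ⟨N, hN⟩ := exists_nat_gt (|c₃| / ε)
  have hNpos : 0 < N + 1 := Nat.succ_pos N
  obtain ⟨j, k, hk0, hkN, hjk⟩ :=
    Real.exists_int_int_abs_mul_sub_le (c₁ / c₃) hNpos
  set gZ : ℤ := (Int.gcd j k : ℤ) with hgZ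
  have hgpos : 0 < Int.gcd j k := Int.gcd_pos_of_ne_zero_right j (ne_of_gt hk0)
  have hgZpos : 0 < gZ := by rw [hgZ]; exact_mod_cast hgpos
  set J : ℤ := j / gZ with hJdef
  set K : ℤ := k / gZ with hKdef
  have hJ : gZ * J = j := Int.mul_ediv_cancel' (Int.gcd_dvd_left j k)
  have hK : gZ * K = k := Int.mul_ediv_cancel' (Int.gcd_dvd_right j k)
  have hKpos : 0 < K := by nlinarith
  have hcop : Int.gcd J K = 1 := Int.gcd_div_gcd_div_gcd hgpos
  obtain ⟨u, v, huv⟩ := Int.isCoprime_iff_gcd_eq_one.mpr hcop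
  set s : ℝ := c₁ * (K : ℝ) - c₃ * (J : ℝ) with hs
  have e1 : (gZ : ℝ) * (K : ℝ) = (k : ℝ) := by exact_mod_cast congrArg (Int.cast : ℤ → ℝ) hK
  have e2 : (gZ : ℝ) * (J : ℝ) = (j : ℝ) := by exact_mod_cast congrArg (Int.cast : ℤ → ℝ) hJ
  have e3 : c₁ / c₃ * c₃ = c₁ := div_mul_cancel₀ c₁ h3
  have hgs : (gZ : ℝ) * s = c₃ * ((k : ℝ) * (c₁ / c₃) - (j : ℝ)) := by
    rw [hs]
    linear_combination c₁ * e1 - c₃ * e2 - (k : ℝ) * e3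
  have hg1 : (1 : ℝ) ≤ (gZ : ℝ) := by exact_mod_cast hgZpos
  have habs : (gZ : ℝ) * |s| = |c₃| * |(k : ℝ) * (c₁ / c₃) - (j : ℝ)| := by
    have h' := congrArg abs hgs
    rwa [abs_mul, abs_mul, abs_of_pos (show (0:ℝ) < (gZ:ℝ) by linarith)] at h'
  have hc3N : |c₃| < ε * ((N : ℝ) + 1 + 1) := by
    have h1 : |c₃| / ε < (N : ℝ) := hN
    have h2 : |c₃| < (N : ℝ) * ε := by
      rw [div_lt_iff₀ hε] at h1; linarith
    nlinarith
  have hs_lt : |s| < ε := by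
    have h1 : |s| ≤ (gZ : ℝ) * |s| := le_mul_of_one_le_left (abs_nonneg s) hg1
    have h2 : |c₃| * |(k : ℝ) * (c₁ / c₃) - (j : ℝ)| ≤ |c₃| * (1 / ((N : ℝ) + 1 + 1)) := by
      apply mul_le_mul_of_nonneg_left _ (abs_nonneg c₃)
      refine hjk.trans (le_of_eq ?_)
      push_cast
      ring
    have h3' : |c₃| * (1 / ((N : ℝ) + 1 + 1)) < ε := by
      rw [mul_one_div, div_lt_iff₀ (by positivity)]
      linarith
    calc |s| ≤ (gZ : ℝ) * |s| := h1
      _ = |c₃| * |(k : ℝ) * (c₁ / c₃) - (j : ℝ)| := habs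
      _ ≤ |c₃| * (1 / ((N : ℝ) + 1 + 1)) := h2
      _ < ε := h3'
  have hs_ne : s ≠ 0 := by
    intro h0
    apply hIr
    refine ⟨J, K, by omega, ?_⟩
    have : c₁ * (K : ℝ) = c₃ * (J : ℝ) := by
      rw [hs] at h0; linarith
    linarith [this]
  set A : ℝ := c₀ * (J : ℝ) + c₁ * (-(u : ℝ)) + c₂ * (K : ℝ) + c₃ * (-(v : ℝ)) with hA
  set t : ℤ := -round (A / s) with ht
  refine ⟨J, -u + t * K, K, -v - t * J, by linear_combination -huv, ?_⟩
  have hval : c₀ * (J : ℝ) + c₁ * ((-u + t * K : ℤ) : ℝ) + c₂ * (K : ℝ)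
      + c₃ * ((-v - t * J : ℤ) : ℝ) = A + (t : ℝ) * s := by
    push_cast
    rw [hA, hs]
    push_cast
    ring
  have hval2 : A + (t : ℝ) * s = s * (A / s - (round (A / s) : ℝ)) := by
    have htc : (t : ℝ) = -((round (A / s) : ℤ) : ℝ) := by
      rw [ht]; push_cast; ring
    rw [htc]
    field_simp
    ring
  rw [hval, hval2, abs_mul]
  calc |s| * |A / s - (round (A / s) : ℝ)| ≤ |s| * (1 / 2) :=
        mul_le_mul_of_nonneg_left (abs_sub_round (A / s)) (abs_nonneg s)
    _ < ε := by nlinarith [abs_nonneg s]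

lemma rel_self (y : ℝ) : ∃ a b : ℤ, b ≠ 0 ∧ (b : ℝ) * y = (a : ℝ) * y :=
  ⟨1, 1, one_ne_zero, by push_cast; ring⟩

lemma rel_zero (x y : ℝ) (hx : x = 0) : ∃ a b : ℤ, b ≠ 0 ∧ (b : ℝ) * x = (a : ℝ) * y :=
  ⟨0, 1, one_ne_zero, by simp [hx]⟩

lemma rel_flip_trans {x y z : ℝ} (hx : x ≠ 0)
    (r1 : ∃ a b : ℤ, b ≠ 0 ∧ (b : ℝ) * x = (a : ℝ) * y)
    (r2 : ∃ a b : ℤ, b ≠ 0 ∧ (b : ℝ) * x = (a : ℝ) * z) :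
    ∃ a b : ℤ, b ≠ 0 ∧ (b : ℝ) * y = (a : ℝ) * z := by
  obtain ⟨a1, b1, hb1, h1⟩ := r1
  obtain ⟨a2, b2, hb2, h2⟩ := r2
  have ha1 : a1 ≠ 0 := by
    intro h
    apply mul_ne_zero (Int.cast_ne_zero.mpr hb1) hx
    rw [h1, h]
    simp
  refine ⟨a2 * b1, a1 * b2, mul_ne_zero ha1 hb2, ?_⟩
  push_cast
  have e1 : (b1 : ℝ) * x = (a1 : ℝ) * y := h1
  have e2 : (b2 : ℝ) * x = (a2 : ℝ) * z := h2
  linear_combination (b1 : ℝ) * e2 - (b2 : ℝ) * e1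

lemma com_of_rels (c₀ c₁ c₂ c₃ y : ℝ)
    (r0 : ∃ a b : ℤ, b ≠ 0 ∧ (b : ℝ) * c₀ = (a : ℝ) * y)
    (r1 : ∃ a b : ℤ, b ≠ 0 ∧ (b : ℝ) * c₁ = (a : ℝ) * y)
    (r2 : ∃ a b : ℤ, b ≠ 0 ∧ (b : ℝ) * c₂ = (a : ℝ) * y)
    (r3 : ∃ a b : ℤ, b ≠ 0 ∧ (b : ℝ) * c₃ = (a : ℝ) * y) :
    ∃ (t : ℝ) (d₀ d₁ d₂ d₃ : ℤ),
      c₀ = t * (d₀ : ℝ) ∧ c₁ = t * (d₁ : ℝ) ∧ c₂ = t * (d₂ : ℝ) ∧ c₃ = t * (d₃ : ℝ) := by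
  obtain ⟨a0, b0, hb0, h0⟩ := r0
  obtain ⟨a1, b1, hb1, h1⟩ := r1
  obtain ⟨a2, b2, hb2, h2⟩ := r2
  obtain ⟨a3, b3, hb3, h3⟩ := r3
  have hB : ((b0 * b1 * b2 * b3 : ℤ) : ℝ) ≠ 0 :=
    Int.cast_ne_zero.mpr (mul_ne_zero (mul_ne_zero (mul_ne_zero hb0 hb1) hb2) hb3)
  refine ⟨y / ((b0 * b1 * b2 * b3 : ℤ) : ℝ),
    a0 * b1 * b2 * b3, b0 * a1 * b2 * b3, b0 * b1 * a2 * b3, b0 * b1 * b2 * a3,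
    ?_, ?_, ?_, ?_⟩ <;>
  · rw [div_mul_eq_mul_div, eq_div_iff hB]
    push_cast
    first
    | linear_combination (b1 : ℝ) * (b2 : ℝ) * (b3 : ℝ) * h0
    | linear_combination (b0 : ℝ) * (b2 : ℝ) * (b3 : ℝ) * h1
    | linear_combination (b0 : ℝ) * (b1 : ℝ) * (b3 : ℝ) * h2
    | linear_combination (b0 : ℝ) * (b1 : ℝ) * (b2 : ℝ) * h3

lemma approx_main (c₀ c₁ c₂ c₃ ε : ℝ) (hε : 0 < ε) : Approx c₀ c₁ c₂ c₃ ε := by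
  by_cases hA : c₂ = 0 ∧ c₃ = 0
  · exact ⟨0, 0, 1, -1, by ring, by simp [hA.1, hA.2, hε]⟩
  by_cases hB : c₀ = 0 ∧ c₁ = 0
  · exact ⟨1, -1, 0, 0, by ring, by simp [hB.1, hB.2, hε]⟩
  by_cases hcom : ∃ (t : ℝ) (d₀ d₁ d₂ d₃ : ℤ),
      c₀ = t * (d₀ : ℝ) ∧ c₁ = t * (d₁ : ℝ) ∧ c₂ = t * (d₂ : ℝ) ∧ c₃ = t * (d₃ : ℝ)
  · obtain ⟨t, d₀, d₁, d₂, d₃, e0, e1, e2, e3⟩ := hcom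
    obtain ⟨k, l, m, n, h1, h2⟩ := hasRoot d₀ d₁ d₂ d₃
    refine ⟨k, l, m, n, h1, ?_⟩
    have e : c₀ * (k : ℝ) + c₁ * (l : ℝ) + c₂ * (m : ℝ) + c₃ * (n : ℝ)
        = t * ((d₀ * k + d₁ * l + d₂ * m + d₃ * n : ℤ) : ℝ) := by
      push_cast
      rw [e0, e1, e2, e3]; ring
    rw [e, h2]
    simpa using hε
  · have key : (c₀ ≠ 0 ∧ c₂ ≠ 0 ∧ ¬ ∃ a b : ℤ, b ≠ 0 ∧ (b : ℝ) * c₀ = (a : ℝ) * c₂)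
        ∨ (c₀ ≠ 0 ∧ c₃ ≠ 0 ∧ ¬ ∃ a b : ℤ, b ≠ 0 ∧ (b : ℝ) * c₀ = (a : ℝ) * c₃)
        ∨ (c₁ ≠ 0 ∧ c₂ ≠ 0 ∧ ¬ ∃ a b : ℤ, b ≠ 0 ∧ (b : ℝ) * c₁ = (a : ℝ) * c₂)
        ∨ (c₁ ≠ 0 ∧ c₃ ≠ 0 ∧ ¬ ∃ a b : ℤ, b ≠ 0 ∧ (b : ℝ) * c₁ = (a : ℝ) * c₃) := by
      by_contra hk
      push_neg at hk
      obtain ⟨k02, k03, k12, k13⟩ := hk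
      apply hcom
      rcases not_and_or.mp hB with h0 | h1
      · rcases not_and_or.mp hA with h2 | h3
        · -- anchor c₀ ≠ 0, y = c₂ ≠ 0
          refine com_of_rels c₀ c₁ c₂ c₃ c₂ (k02 h0 h2) ?_ (rel_self c₂) ?_
          · by_cases h1' : c₁ = 0
            · exact rel_zero _ _ h1'
            · exact k12 h1' h2
          · by_cases h3' : c₃ = 0
            · exact rel_zero _ _ h3'
            · exact rel_flip_trans h0 (k03 h0 h3') (k02 h0 h2)
        · -- anchor c₀ ≠ 0, y = c₃ ≠ 0
          refine com_of_rels c₀ c₁ c₂ c₃ c₃ (k03 h0 h3) ?_ ?_ (rel_self c₃)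
          · by_cases h1' : c₁ = 0
            · exact rel_zero _ _ h1'
            · exact k13 h1' h3
          · by_cases h2' : c₂ = 0
            · exact rel_zero _ _ h2'
            · exact rel_flip_trans h0 (k02 h0 h2') (k03 h0 h3)
      · rcases not_and_or.mp hA with h2 | h3
        · -- anchor c₁ ≠ 0, y = c₂ ≠ 0
          refine com_of_rels c₀ c₁ c₂ c₃ c₂ ?_ (k12 h1 h2) (rel_self c₂) ?_
          · by_cases h0' : c₀ = 0
            · exact rel_zero _ _ h0'
            · exact k02 h0' h2
          · by_cases h3' : c₃ = 0
            · exact rel_zero _ _ h3'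
            · exact rel_flip_trans h1 (k13 h1 h3') (k12 h1 h2)
        · -- anchor c₁ ≠ 0, y = c₃ ≠ 0
          refine com_of_rels c₀ c₁ c₂ c₃ c₃ ?_ (k13 h1 h3) ?_ (rel_self c₃)
          · by_cases h0' : c₀ = 0
            · exact rel_zero _ _ h0'
            · exact k03 h0' h3
          · by_cases h2' : c₂ = 0
            · exact rel_zero _ _ h2'
            · exact rel_flip_trans h1 (k12 h1 h2') (k13 h1 h3)
    rcases key with ⟨h0, h2, hir⟩ | ⟨h0, h3, hir⟩ | ⟨h1, h2, hir⟩ | ⟨h1, h3, hir⟩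
    · exact approx_swap01 (approx_swap23 (approx_of_irrational c₁ c₀ c₃ c₂ ε hε h2 hir))
    · exact approx_swap01 (approx_of_irrational c₁ c₀ c₂ c₃ ε hε h3 hir)
    · exact approx_swap23 (approx_of_irrational c₀ c₁ c₃ c₂ ε hε h2 hir)
    · exact approx_of_irrational c₀ c₁ c₂ c₃ ε hε h3 hir

/-- For any hyperplane `H = {x : B(ρ,x) = 0}` through the origin of `ℝ⁴`
(`ρ ≠ 0`), there are lattice roots of `Γ^{2,2}` at arbitrarily small Euclidean
distance `|B(ρ,α)|/‖ρ‖₂` from `H`: either `H` contains a lattice root or there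
are lattice roots arbitrarily close by. -/
theorem latticeRoots_accumulate_on_hyperplanes
    (ρ : EuclideanSpace ℝ (Fin 4)) (hρ : ρ ≠ 0) (ε : ℝ) (hε : 0 < ε) :
    ∃ α : Fin 4 → ℤ, IsLatticeRoot α ∧
      |GammaBR ρ (WithLp.toLp 2 (fun i => (α i : ℝ)))| < ε * ‖ρ‖ := by
  have hρn : 0 < ‖ρ‖ := norm_pos_iff.mpr hρ
  obtain ⟨k, l, m, n, h1, h2⟩ :=
    approx_main (ρ 1) (ρ 0) (ρ 3) (ρ 2) (ε * ‖ρ‖) (by positivity)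
  refine ⟨![k, l, m, n], ?_, ?_⟩
  · show (![k, l, m, n]) 0 * (![k, l, m, n]) 1 + (![k, l, m, n]) 2 * (![k, l, m, n]) 3 = -1
    simpa [Matrix.cons_val_zero, Matrix.cons_val_one, Matrix.head_cons,
      Matrix.cons_val_two, Matrix.cons_val_three, Matrix.tail_cons] using h1
  · have e : GammaBR ρ (WithLp.toLp 2 (fun i => ((![k, l, m, n]) i : ℝ)))
        = -(ρ 1 * (k : ℝ) + ρ 0 * (l : ℝ) + ρ 3 * (m : ℝ) + ρ 2 * (n : ℝ)) := by
      simp only [GammaBR, WithLp.ofLp_toLp, Matrix.cons_val_zero, Matrix.cons_val_one, Matrix.head_cons,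
        Matrix.cons_val_two, Matrix.cons_val_three, Matrix.tail_cons]
      ring
    rw [e, abs_neg]
    exact h2
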